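/- Let n ≥ 1 and let g and h be n×n positive definite Hermitian complex matrices. Then det g and det h are positive real numbers and (det h / det g)^{1/n} ≤ (1/n)·tr(g⁻¹h). (Arithmetic–geometric mean inequality for the eigenvalues of h relative to g, used in the uniqueness proof via tr_{ω₁}ω₂ ≥ n·e^F.) -/

import Mathlib

open Matrix
open scoped ComplexOrder

/-- Arithmetic–geometric mean inequality for the eigenvalues of `h` relative to `g`:
`(det h / det g)^(1/n) ≤ (1/n) tr(g⁻¹h)`, with both determinants positive reals. -/
theorem det_ratio_rpow_le_trace (n : ℕ) (hn : 1 ≤ n)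
    (g h : Matrix (Fin n) (Fin n) ℂ) (hg : g.PosDef) (hh : h.PosDef) :
    0 < (g.det).re ∧ (g.det).im = 0 ∧ 0 < (h.det).re ∧ (h.det).im = 0 ∧
      ((h.det).re / (g.det).re) ^ ((1 : ℝ) / n)
        ≤ (1 / (n : ℝ)) * ((g⁻¹ * h).trace).re := by
  have hgd : (0 : ℂ) < g.det := hg.det_pos
  have hhd : (0 : ℂ) < h.det := hh.det_pos
  rw [Complex.lt_def] at hgd hhd
  simp only [Complex.zero_re, Complex.zero_im] at hgd hhd
  refine ⟨hgd.1, hgd.2.symm, hhd.1, hhd.2.symm, ?_⟩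
  -- square root of g
  open scoped MatrixOrder in
  set s : Matrix (Fin n) (Fin n) ℂ := CFC.sqrt g with hs_def
  have hs : s.PosSemidef := by open scoped MatrixOrder in exact (CFC.sqrt_nonneg g).posSemidef
  have hss : s * s = g := by
    open scoped MatrixOrder in exact CFC.sqrt_mul_sqrt_self g hg.posSemidef.nonneg
  have hsdet : IsUnit s.det := by
    have h2 : s.det * s.det = g.det := by rw [← det_mul, hss]
    exact isUnit_iff_ne_zero.2 fun hz => hg.det_pos.ne' (by rw [← h2, hz, mul_zero])
  -- M = s⁻¹ h s⁻¹
  set M : Matrix (Fin n) (Fin n) ℂ := s⁻¹ * h * s⁻¹ with hM_def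
  have hsinvH : s⁻¹.IsHermitian := hs.1.inv
  have hMpsd : M.PosSemidef := by
    have := hh.posSemidef.conjTranspose_mul_mul_same s⁻¹
    rwa [hsinvH.eq] at this
  have hMH : M.IsHermitian := hMpsd.1
  -- trace identity
  have hginv : g⁻¹ = s⁻¹ * s⁻¹ := by rw [← hss, Matrix.mul_inv_rev]
  have htr : (g⁻¹ * h).trace = M.trace := by
    rw [hginv, hM_def]
    exact (Matrix.trace_mul_cycle s⁻¹ h s⁻¹).symm
  -- det identity
  have hdet : M.det = h.det / g.det := by
    have : s.det * s.det = g.det := by rw [← det_mul, hss]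
    rw [hM_def, det_mul, det_mul, det_nonsing_inv, ← this]
    field_simp
    rw [Ring.inverse_eq_inv, inv_pow, inv_mul_eq_div]
  -- eigenvalues
  set lam := hMH.eigenvalues with hlam
  have hlam_nonneg : ∀ i, 0 ≤ lam i := fun i => hMpsd.eigenvalues_nonneg i
  have hdet_eq : M.det = (∏ i, (lam i : ℂ)) := hMH.det_eq_prod_eigenvalues
  have htr_eq : M.trace = (∑ i, (lam i : ℂ)) := by
    conv_lhs => rw [hMH.spectral_theorem]
    have h1 : (star (hMH.eigenvectorUnitary : Matrix (Fin n) (Fin n) ℂ)) *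
        (hMH.eigenvectorUnitary : Matrix (Fin n) (Fin n) ℂ) = 1 :=
      Matrix.mem_unitaryGroup_iff'.mp hMH.eigenvectorUnitary.2
    rw [Unitary.conjStarAlgAut_apply]
    rw [Matrix.trace_mul_cycle, h1, one_mul, trace_diagonal]
    simp [hlam]
  have hMdet_re : M.det.re = ∏ i, lam i := by
    rw [hdet_eq, ← Complex.ofReal_prod, Complex.ofReal_re]
  have hMtr_re : M.trace.re = ∑ i, lam i := by
    rw [htr_eq, ← Complex.ofReal_sum, Complex.ofReal_re]
  -- the ratio is det M .re
  have hratio : (h.det).re / (g.det).re = M.det.re := by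
    have hgC : g.det = ((g.det).re : ℂ) := by
      apply Complex.ext <;> simp [hgd.2.symm]
    have hhC : h.det = ((h.det).re : ℂ) := by
      apply Complex.ext <;> simp [hhd.2.symm]
    rw [hdet, hgC, hhC, ← Complex.ofReal_div]
    simp
  rw [hratio, htr, hMdet_re, hMtr_re]
  -- AM-GM
  have hn' : (0 : ℝ) < n := by exact_mod_cast hn
  have amgm := Real.geom_mean_le_arith_mean_weighted Finset.univ
    (fun _ => 1 / (n : ℝ)) lam (fun i _ => by positivity)
    (by simp [Finset.card_univ]; field_simp) (fun i _ => hlam_nonneg i)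
  calc (∏ i, lam i) ^ ((1 : ℝ) / n) = ∏ i, lam i ^ ((1 : ℝ) / n) := by
        rw [← Real.finset_prod_rpow _ _ (fun i _ => hlam_nonneg i)]
    _ ≤ ∑ i, (1 / (n : ℝ)) * lam i := amgm
    _ = (1 / (n : ℝ)) * ∑ i, lam i := by rw [Finset.mul_sum]
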